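/- Let s and l be positive integers and let p be an odd prime with p > 2ls+1. Then p divides the numerator of H({2s}^l; p-1), and for every j with 0 ≤ j ≤ l-1, p divides the numerator of H({2s}^l; j+(p-1)/2); that is, {p-1} ∪ { j+(p-1)/2 : 0 ≤ j ≤ l-1 } ⊆ J₁({2s}^l | p). -/

import Mathlib

open Classical in
/-- Multiple harmonic sum `H(s₁,…,s_l; n) = ∑_{1 ≤ k₁ < ⋯ < k_l ≤ n} k₁^{-s₁} ⋯ k_l^{-s_l}`,
encoded via strictly increasing tuples of indices in `{1,…,n}` (an empty sum is `0`,
and `mhs [] n = 1`). -/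
noncomputable def mhs (s : List ℕ) (n : ℕ) : ℚ :=
  ∑ k ∈ Finset.univ.filter
      (fun k : Fin s.length → Fin (n + 1) =>
        StrictMono k ∧ ∀ i, 1 ≤ (k i : ℕ)),
    ∏ i, 1 / (((k i : ℕ) : ℚ) ^ s.get i)

open Classical in
/-- `p`-restricted multiple harmonic sum `H*(s; n)`: same sum with all indices
not divisible by `p`. -/
noncomputable def mhsStar (p : ℕ) (s : List ℕ) (n : ℕ) : ℚ :=
  ∑ k ∈ Finset.univ.filter
      (fun k : Fin s.length → Fin (n + 1) =>
        StrictMono k ∧ ∀ i, 1 ≤ (k i : ℕ) ∧ ¬ p ∣ (k i : ℕ)),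
    ∏ i, 1 / (((k i : ℕ) : ℚ) ^ s.get i)

section Aux

variable {p : ℕ} [hpI : Fact p.Prime]

private lemma den_ne {q : ℚ} (h : ¬ p ∣ q.den) : ((q.den : ZMod p)) ≠ 0 := by
  rw [Ne, ZMod.natCast_eq_zero_iff]; exact h

private lemma cast_sum_zmod {ι : Type*} (t : Finset ι) (f : ι → ℚ)
    (h : ∀ i ∈ t, ¬ p ∣ (f i).den) :
    ¬ p ∣ (∑ i ∈ t, f i).den ∧
      (((∑ i ∈ t, f i) : ℚ) : ZMod p) = ∑ i ∈ t, ((f i : ℚ) : ZMod p) := by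
  classical
  have hp := hpI.out
  induction t using Finset.induction with
  | empty => simpa using hp.one_lt.ne'
  | insert _ _ ha ih =>
    rename_i a t'
    have h1 : ¬ p ∣ (f a).den := h a (Finset.mem_insert_self a t')
    have ih' := ih (fun i hi => h i (Finset.mem_insert_of_mem hi))
    rw [Finset.sum_insert ha, Finset.sum_insert ha]
    refine ⟨fun hd => ?_, ?_⟩
    · rcases (Nat.Prime.dvd_mul hp).mp (hd.trans (Rat.add_den_dvd _ _)) with h' | h'
      exacts [h1 h', ih'.1 h']
    · rw [Rat.cast_add_of_ne_zero (den_ne h1) (den_ne ih'.1), ih'.2]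

private lemma cast_prod_zmod {ι : Type*} (t : Finset ι) (f : ι → ℚ)
    (h : ∀ i ∈ t, ¬ p ∣ (f i).den) :
    ¬ p ∣ (∏ i ∈ t, f i).den ∧
      (((∏ i ∈ t, f i) : ℚ) : ZMod p) = ∏ i ∈ t, ((f i : ℚ) : ZMod p) := by
  classical
  have hp := hpI.out
  induction t using Finset.induction with
  | empty => simpa using hp.one_lt.ne'
  | insert _ _ ha ih =>
    rename_i a t'
    have h1 : ¬ p ∣ (f a).den := h a (Finset.mem_insert_self a t')
    have ih' := ih (fun i hi => h i (Finset.mem_insert_of_mem hi))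
    rw [Finset.prod_insert ha, Finset.prod_insert ha]
    refine ⟨fun hd => ?_, ?_⟩
    · rcases (Nat.Prime.dvd_mul hp).mp (hd.trans (Rat.mul_den_dvd _ _)) with h' | h'
      exacts [h1 h', ih'.1 h']
    · rw [Rat.cast_mul_of_ne_zero (den_ne h1) (den_ne ih'.1), ih'.2]

private lemma term_den (k m : ℕ) (hk : 0 < k) : ((1 / ((k:ℚ))^m : ℚ)).den = k ^ m := by
  rw [one_div, ← Nat.cast_pow, Rat.inv_natCast_den_of_pos (pow_pos hk m)]

private lemma term_cast (k m : ℕ) (hk : 0 < k) :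
    (((1 / ((k:ℚ))^m : ℚ)) : ZMod p) = ((k : ZMod p))⁻¹ ^ m := by
  rw [one_div, ← Nat.cast_pow, Rat.cast_def, Rat.inv_natCast_den_of_pos (pow_pos hk m),
    Rat.inv_natCast_num_of_pos (pow_pos hk m)]
  push_cast
  rw [inv_pow]
  simp [div_eq_mul_inv]

private lemma dvd_num_of (q : ℚ) (hd : ¬ p ∣ q.den) (h : ((q : ℚ) : ZMod p) = 0) :
    (p : ℤ) ∣ q.num := by
  rw [Rat.cast_def, div_eq_zero_iff] at h
  rcases h with h | h
  · rwa [ZMod.intCast_zmod_eq_zero_iff_dvd] at h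
  · exact absurd h (den_ne hd)

private lemma psum_full (e : ℕ) (he : 0 < e) (he2 : e < p - 1) :
    ∑ k ∈ Finset.Icc 1 (p-1), ((k : ZMod p))⁻¹ ^ e = 0 := by
  have hp := hpI.out
  have h2 : ∑ k ∈ Finset.Icc 1 (p-1), ((k : ZMod p))⁻¹ ^ e
      = ∑ x ∈ (Finset.univ : Finset (ZMod p)).erase 0, (x⁻¹) ^ e := by
    refine Finset.sum_nbij' (fun k => ((k : ZMod p))) (fun x => x.val) ?_ ?_ ?_ ?_ ?_
    · intro k hk
      simp only [Finset.mem_Icc] at hk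
      have : ¬ p ∣ k := Nat.not_dvd_of_pos_of_lt (by omega) (by omega)
      simp only [Finset.mem_erase, Finset.mem_univ, and_true]
      rw [Ne, ZMod.natCast_eq_zero_iff]; exact this
    · intro x hx
      simp only [Finset.mem_erase, Finset.mem_univ, and_true] at hx
      have h1 : 0 < x.val := by
        rcases Nat.eq_zero_or_pos x.val with h | h
        · exact absurd (by rw [← ZMod.val_eq_zero]; exact h) hx
        · exact h
      have h2 : x.val < p := x.val_lt
      simp only [Finset.mem_Icc]; omega
    · intro k hk
      simp only [Finset.mem_Icc] at hk
      exact ZMod.val_cast_of_lt (by omega)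
    · intro x hx
      simp [ZMod.natCast_val, ZMod.cast_id]
    · intro k hk; rfl
  rw [h2]
  have h3 : ∑ x ∈ (Finset.univ : Finset (ZMod p)).erase 0, (x⁻¹) ^ e
      = ∑ x ∈ (Finset.univ : Finset (ZMod p)).erase 0, x ^ e := by
    refine Finset.sum_nbij' (fun x => x⁻¹) (fun x => x⁻¹) ?_ ?_ ?_ ?_ ?_ <;>
      simp_all [inv_inv, inv_eq_zero]
  rw [h3]
  have h4 : ∑ x ∈ (Finset.univ : Finset (ZMod p)).erase 0, x ^ e
      = ∑ x : ZMod p, x ^ e := by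
    rw [← Finset.add_sum_erase _ _ (Finset.mem_univ (0 : ZMod p))]
    rw [zero_pow he.ne']
    ring
  rw [h4]
  exact FiniteField.sum_pow_lt_card_sub_one (ZMod p) e (by rwa [ZMod.card])

private lemma psum_half (hodd : Odd p) (e : ℕ) (heven : Even e) (he : 0 < e)
    (he2 : e < p - 1) :
    ∑ k ∈ Finset.Icc 1 ((p-1)/2), ((k : ZMod p))⁻¹ ^ e = 0 := by
  have hp := hpI.out
  have hp2 : p ≠ 2 := by rintro rfl; exact (Nat.not_odd_iff_even.mpr even_two) hodd
  have hp3 : 3 ≤ p := by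
    have := hp.two_le; rcases Nat.lt_or_ge p 3 with h | h; · interval_cases p <;> simp_all
    · exact h
  set q := (p-1)/2 with hq
  have hpq : p - 1 = 2 * q := by
    rcases hodd with ⟨m, rfl⟩; omega
  have hsplit : ∑ k ∈ Finset.Ioc 0 q, ((k : ZMod p))⁻¹ ^ e
        + ∑ k ∈ Finset.Ioc q (p-1), ((k : ZMod p))⁻¹ ^ e
      = ∑ k ∈ Finset.Ioc 0 (p-1), ((k : ZMod p))⁻¹ ^ e := by
    exact Finset.sum_Ioc_consecutive _ (by omega) (by omega)
  have hrefl : ∑ k ∈ Finset.Ioc q (p-1), ((k : ZMod p))⁻¹ ^ e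
      = ∑ k ∈ Finset.Ioc 0 q, ((k : ZMod p))⁻¹ ^ e := by
    refine Finset.sum_nbij' (fun k => p - k) (fun k => p - k) ?_ ?_ ?_ ?_ ?_
    · intro k hk; simp only [Finset.mem_Ioc] at *; omega
    · intro k hk; simp only [Finset.mem_Ioc] at *; omega
    · intro k hk; simp only [Finset.mem_Ioc] at hk; show p - (p - k) = k; omega
    · intro k hk; simp only [Finset.mem_Ioc] at hk; show p - (p - k) = k; omega
    · intro k hk
      simp only [Finset.mem_Ioc] at hk
      have : ((p - k : ℕ) : ZMod p) = - (k : ZMod p) := by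
        have : (p:ℕ) - k + k = p := by omega
        have h0 : ((p - k : ℕ) : ZMod p) + (k : ZMod p) = 0 := by
          rw [← Nat.cast_add, this, ZMod.natCast_self]
        linear_combination h0
      rw [this, inv_neg, heven.neg_pow]
  have hIoc : Finset.Ioc 0 (p-1) = Finset.Icc 1 (p-1) := by
    ext x; simp [Finset.mem_Ioc, Finset.mem_Icc]; omega
  have hIoc2 : Finset.Ioc 0 q = Finset.Icc 1 q := by
    ext x; simp [Finset.mem_Ioc, Finset.mem_Icc]; omega
  have hfull : ∑ k ∈ Finset.Ioc 0 (p-1), ((k : ZMod p))⁻¹ ^ e = 0 := by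
    rw [hIoc]; exact psum_full (p := p) e he he2
  have h2 : (2 : ZMod p) * ∑ k ∈ Finset.Ioc 0 q, ((k : ZMod p))⁻¹ ^ e = 0 := by
    rw [two_mul]; rw [hrefl] at hsplit; rw [hsplit, hfull]
  have h2ne : (2 : ZMod p) ≠ 0 := by
    have : ((2:ℕ) : ZMod p) ≠ 0 := by
      rw [Ne, ZMod.natCast_eq_zero_iff]
      exact fun hd => hp2 ((Nat.prime_dvd_prime_iff_eq hp Nat.prime_two).mp hd)
    simpa using this
  rcases mul_eq_zero.mp h2 with h | h
  · exact absurd h h2ne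
  · rwa [hIoc2] at h

private lemma esymm_vanish (n s l : ℕ)
    (hP : ∀ b, 1 ≤ b → b ≤ l → ∑ k ∈ Finset.Icc 1 n, ((k : ZMod p))⁻¹ ^ (2*s*b) = 0)
    (m : ℕ) (hm1 : 1 ≤ m) (hml : m ≤ l) (hmp : m < p) :
    ∑ A ∈ (Finset.Icc 1 n).powersetCard m, ∏ k ∈ A, ((k : ZMod p))⁻¹ ^ (2*s) = 0 := by
  classical
  set g : ℕ → ZMod p := fun k => ((k : ZMod p))⁻¹ ^ (2*s) with hg
  set σ := {x // x ∈ Finset.Icc 1 n}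
  set f : σ → ZMod p := fun x => g (x : ℕ) with hf
  have hesymm : ∀ a : ℕ, MvPolynomial.aeval f (MvPolynomial.esymm σ (ZMod p) a)
      = ∑ A ∈ (Finset.Icc 1 n).powersetCard a, ∏ k ∈ A, g k := by
    intro a
    rw [MvPolynomial.aeval_esymm_eq_multiset_esymm]
    have : (Finset.univ.val.map f) = ((Finset.Icc 1 n).val.map g) := by
      rw [Finset.univ_eq_attach, Finset.attach_val]
      exact Multiset.attach_map_val' _ _
    rw [this, Finset.esymm_map_val]
  have hpsum : ∀ b : ℕ, 1 ≤ b → b ≤ l →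
      MvPolynomial.aeval f (MvPolynomial.psum σ (ZMod p) b) = 0 := by
    intro b hb1 hb2
    rw [MvPolynomial.psum, map_sum]
    simp only [map_pow, MvPolynomial.aeval_X]
    have : ∑ x : σ, f x ^ b = ∑ k ∈ Finset.Icc 1 n, g k ^ b :=
      Finset.sum_coe_sort (Finset.Icc 1 n) (fun k => g k ^ b)
    rw [this]
    have : ∀ k, g k ^ b = ((k : ZMod p))⁻¹ ^ (2*s*b) := by
      intro k; rw [hg, ← pow_mul]
    simp only [this]
    exact hP b hb1 hb2
  have newton := congrArg (MvPolynomial.aeval f) (MvPolynomial.mul_esymm_eq_sum σ (ZMod p) m)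
  rw [map_mul, map_mul, map_sum, map_natCast, map_pow, map_neg, map_one] at newton
  rw [hesymm] at newton
  have hz : ∑ a ∈ Finset.HasAntidiagonal.antidiagonal m with a.1 < m,
      MvPolynomial.aeval f ((-1) ^ a.1 * MvPolynomial.esymm σ (ZMod p) a.1
        * MvPolynomial.psum σ (ZMod p) a.2) = 0 := by
    refine Finset.sum_eq_zero fun a ha => ?_
    simp only [Finset.mem_filter, Finset.HasAntidiagonal.mem_antidiagonal] at ha
    rw [map_mul, hpsum a.2 (by omega) (by omega), mul_zero]
  rw [hz, mul_zero] at newton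
  have hmne : ((m : ZMod p)) ≠ 0 := by
    rw [Ne, ZMod.natCast_eq_zero_iff]
    exact Nat.not_dvd_of_pos_of_lt (by omega) hmp
  rcases mul_eq_zero.mp newton with h | h
  · exact absurd h hmne
  · exact h

open Polynomial in
private lemma coeff_prod_one_add {R : Type*} [CommRing R] (g : ℕ → R) (t : Finset ℕ)
    (m : ℕ) :
    (∏ k ∈ t, (Polynomial.C (g k) * Polynomial.X + 1)).coeff m
      = ∑ A ∈ t.powersetCard m, ∏ k ∈ A, g k := by
  classical
  induction t using Finset.induction generalizing m with
  | empty =>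
    rcases m with _ | m'
    · simp
    · rw [Finset.prod_empty, Polynomial.coeff_one]
      rw [Finset.powersetCard_eq_empty.mpr (by simp)]
      simp
  | insert _ _ ha ih =>
    rename_i a t'
    rw [Finset.prod_insert ha]
    have expand : (C (g a) * X + 1) * (∏ k ∈ t', (C (g k) * X + 1))
        = C (g a) * (X * ∏ k ∈ t', (C (g k) * X + 1)) + ∏ k ∈ t', (C (g k) * X + 1) := by
      ring
    rw [expand]
    rcases m with _ | m'
    · rw [Polynomial.coeff_add, Polynomial.coeff_C_mul, Polynomial.mul_coeff_zero]
      simp only [Polynomial.coeff_X_zero, zero_mul, mul_zero, zero_add]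
      rw [ih 0]
      simp [Finset.powersetCard_zero]
    · rw [Polynomial.coeff_add, Polynomial.coeff_C_mul, Polynomial.coeff_X_mul]
      rw [ih m', ih (m'+1)]
      rw [Finset.powersetCard_succ_insert ha]
      have hdisj : Disjoint (t'.powersetCard (m'+1))
          ((t'.powersetCard m').image (insert a)) := by
        rw [Finset.disjoint_right]
        intro A hA hA'
        simp only [Finset.mem_image] at hA
        obtain ⟨B, hB, rfl⟩ := hA
        have := (Finset.mem_powersetCard.mp hA').1
        exact ha (this (Finset.mem_insert_self a B))
      rw [Finset.sum_union hdisj]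
      have himg : ∑ A ∈ (t'.powersetCard m').image (insert a), ∏ k ∈ A, g k
          = ∑ B ∈ t'.powersetCard m', g a * ∏ k ∈ B, g k := by
        rw [Finset.sum_image]
        · refine Finset.sum_congr rfl fun B hB => ?_
          have haB : a ∉ B := fun h => ha ((Finset.mem_powersetCard.mp hB).1 h)
          rw [Finset.prod_insert haB]
        · intro B hB C hC h
          have haB : a ∉ B := fun h => ha ((Finset.mem_powersetCard.mp hB).1 h)
          have haC : a ∉ C := fun h => ha ((Finset.mem_powersetCard.mp hC).1 h)
          rw [← Finset.erase_insert haB, ← Finset.erase_insert haC, h]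
      rw [himg, ← Finset.mul_sum]
      ring

private lemma esymm_split {R : Type*} [CommRing R] (g : ℕ → R) (q j l : ℕ) (hj : j < l)
    (hE : ∀ m, 1 ≤ m → m ≤ l →
      ∑ A ∈ (Finset.Icc 1 q).powersetCard m, ∏ k ∈ A, g k = 0) :
    ∑ A ∈ (Finset.Icc 1 (q+j)).powersetCard l, ∏ k ∈ A, g k = 0 := by
  classical
  have hunion : Finset.Icc 1 (q+j) = Finset.Icc 1 q ∪ Finset.Icc (q+1) (q+j) := by
    ext x; simp only [Finset.mem_Icc, Finset.mem_union]; omega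
  have hdisj : Disjoint (Finset.Icc 1 q) (Finset.Icc (q+1) (q+j)) := by
    rw [Finset.disjoint_left]; intro x hx hx'
    simp only [Finset.mem_Icc] at hx hx'; omega
  rw [← coeff_prod_one_add g, hunion, Finset.prod_union hdisj, Polynomial.coeff_mul]
  refine Finset.sum_eq_zero fun x hx => ?_
  rw [Finset.HasAntidiagonal.mem_antidiagonal] at hx
  rw [coeff_prod_one_add, coeff_prod_one_add]
  rcases Nat.eq_zero_or_pos x.1 with h0 | h0
  · have hcard : (Finset.Icc (q+1) (q+j)).card < x.2 := by
      rw [Nat.card_Icc]; omega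
    rw [Finset.powersetCard_eq_empty.mpr hcard]
    simp
  · rw [hE x.1 h0 (by omega)]
    simp

open Classical in
private lemma tuple_subsets {R : Type*} [CommSemiring R] (g : ℕ → R) (L n : ℕ) :
    ∑ k ∈ Finset.univ.filter
      (fun k : Fin L → Fin (n + 1) => StrictMono k ∧ ∀ i, 1 ≤ (k i : ℕ)),
      ∏ i, g ((k i : ℕ))
    = ∑ A ∈ (Finset.Icc 1 n).powersetCard L, ∏ a ∈ A, g a := by
  classical
  refine Finset.sum_bij (fun k _ => Finset.image (fun i => ((k i : ℕ))) Finset.univ)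
    ?_ ?_ ?_ ?_
  · intro k hk
    rw [Finset.mem_filter] at hk
    obtain ⟨-, hmono, hone⟩ := hk
    have hinj : Function.Injective (fun i => ((k i : ℕ))) := by
      intro a b hab
      exact hmono.injective (Fin.val_injective hab)
    rw [Finset.mem_powersetCard]
    constructor
    · intro x hx
      simp only [Finset.mem_image] at hx
      obtain ⟨i, -, rfl⟩ := hx
      rw [Finset.mem_Icc]
      exact ⟨hone i, Nat.lt_succ_iff.mp (k i).isLt⟩
    · rw [Finset.card_image_of_injective _ hinj, Finset.card_univ, Fintype.card_fin]
  · intro k hk k' hk' h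
    rw [Finset.mem_filter] at hk hk'
    obtain ⟨-, hmono, hone⟩ := hk
    obtain ⟨-, hmono', hone'⟩ := hk'
    have hvmono : StrictMono (fun i => ((k i : ℕ))) := fun a b hab => hmono hab
    have hvmono' : StrictMono (fun i => ((k' i : ℕ))) := fun a b hab => hmono' hab
    have hcard : (Finset.image (fun i => ((k i : ℕ))) Finset.univ).card = L := by
      rw [Finset.card_image_of_injective _ hvmono.injective, Finset.card_univ,
        Fintype.card_fin]
    have h' : Finset.image (fun i => ((k i : ℕ))) Finset.univ
        = Finset.image (fun i => ((k' i : ℕ))) Finset.univ := h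
    have h1 := Finset.orderEmbOfFin_unique hcard
      (fun i => Finset.mem_image_of_mem _ (Finset.mem_univ i)) hvmono
    have h2 := Finset.orderEmbOfFin_unique hcard
      (fun i => h' ▸ Finset.mem_image_of_mem (fun i => ((k' i : ℕ))) (Finset.mem_univ i))
      hvmono'
    funext i
    exact Fin.val_injective (congrFun (h1.trans h2.symm) i)
  · intro A hA
    rw [Finset.mem_powersetCard] at hA
    obtain ⟨hsub, hcard⟩ := hA
    have hmem : ∀ i : Fin L, A.orderEmbOfFin hcard i ∈ Finset.Icc 1 n :=
      fun i => hsub (Finset.orderEmbOfFin_mem A hcard i)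
    refine ⟨fun i => ⟨A.orderEmbOfFin hcard i, ?_⟩, ?_, ?_⟩
    · have := (Finset.mem_Icc.mp (hmem i)).2; omega
    · rw [Finset.mem_filter]
      refine ⟨Finset.mem_univ _, ?_, ?_⟩
      · intro a b hab
        exact (A.orderEmbOfFin hcard).strictMono hab
      · intro i
        exact (Finset.mem_Icc.mp (hmem i)).1
    · apply Finset.coe_injective
      rw [Finset.coe_image, Finset.coe_univ, Set.image_univ]
      have : (fun i : Fin L => ((⟨A.orderEmbOfFin hcard i, by
          have := (Finset.mem_Icc.mp (hmem i)).2; omega⟩ : Fin (n+1)) : ℕ))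
          = fun i => A.orderEmbOfFin hcard i := rfl
      rw [this]
      exact Finset.range_orderEmbOfFin A hcard
  · intro k hk
    rw [Finset.mem_filter] at hk
    obtain ⟨-, hmono, -⟩ := hk
    have hinj : Function.Injective (fun i => ((k i : ℕ))) := by
      intro a b hab
      exact hmono.injective (Fin.val_injective hab)
    rw [Finset.prod_image (fun a _ b _ h => hinj h)]

private lemma mhs_cast (s l n : ℕ) (hn : n < p) :
    ¬ p ∣ (mhs (List.replicate l (2*s)) n).den ∧
    ((mhs (List.replicate l (2*s)) n : ℚ) : ZMod p)
      = ∑ k ∈ Finset.univ.filter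
          (fun k : Fin (List.replicate l (2*s)).length → Fin (n + 1) =>
            StrictMono k ∧ ∀ i, 1 ≤ (k i : ℕ)),
          ∏ i, ((k i : ℕ) : ZMod p)⁻¹ ^ (2*s) := by
  classical
  have hp := hpI.out
  rw [mhs]
  have hterm : ∀ k ∈ Finset.univ.filter
      (fun k : Fin (List.replicate l (2*s)).length → Fin (n + 1) =>
        StrictMono k ∧ ∀ i, 1 ≤ (k i : ℕ)),
      (¬ p ∣ (∏ i, 1 / (((k i : ℕ) : ℚ)) ^ ((List.replicate l (2*s)).get i)).den) ∧
      (((∏ i, 1 / (((k i : ℕ) : ℚ)) ^ ((List.replicate l (2*s)).get i) : ℚ)) : ZMod p)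
        = ∏ i, ((k i : ℕ) : ZMod p)⁻¹ ^ (2*s) := by
    intro k hk
    have hone : ∀ i, 1 ≤ (k i : ℕ) := (Finset.mem_filter.mp hk).2.2
    have h1 : ∀ i ∈ Finset.univ,
        ¬ p ∣ (1 / (((k i : ℕ) : ℚ)) ^ ((List.replicate l (2*s)).get i)).den := by
      intro i _
      rw [term_den _ _ (hone i)]
      intro hd
      have hdk := hp.dvd_of_dvd_pow hd
      have hlt : (k i : ℕ) < p := lt_of_le_of_lt (Nat.lt_succ_iff.mp (k i).isLt) hn
      exact Nat.not_dvd_of_pos_of_lt (hone i) hlt hdk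
    obtain ⟨hd, hc⟩ := cast_prod_zmod Finset.univ _ h1
    refine ⟨hd, ?_⟩
    rw [hc]
    refine Finset.prod_congr rfl fun i _ => ?_
    rw [term_cast _ _ (hone i), List.get_eq_getElem, List.getElem_replicate]
  obtain ⟨hd, hc⟩ := cast_sum_zmod _ _ (fun k hk => (hterm k hk).1)
  refine ⟨hd, ?_⟩
  rw [hc]
  exact Finset.sum_congr rfl (fun k hk => (hterm k hk).2)

end Aux

/-- For `p > 2ls+1` an odd prime, `p` divides the numerator of `H({2s}^l; p-1)` and of
`H({2s}^l; j+(p-1)/2)` for `0 ≤ j ≤ l-1`. -/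
theorem stmt18 (s l p : ℕ) (hs : 0 < s) (hl : 0 < l) (hp : p.Prime) (hodd : Odd p)
    (hbig : 2 * l * s + 1 < p) :
    (p : ℤ) ∣ (mhs (List.replicate l (2 * s)) (p - 1)).num ∧
    ∀ j : ℕ, j ≤ l - 1 →
      (p : ℤ) ∣ (mhs (List.replicate l (2 * s)) (j + (p - 1) / 2)).num := by
  classical
  haveI : Fact p.Prime := ⟨hp⟩
  have hls : 2 * l ≤ 2 * l * s := Nat.le_mul_of_pos_right _ hs
  have hlsb : ∀ b, b ≤ l → 2 * s * b ≤ 2 * l * s := by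
    intro b hb
    calc 2 * s * b ≤ 2 * s * l := Nat.mul_le_mul_left _ hb
    _ = 2 * l * s := by ring
  have hlp : l < p := by omega
  -- power sums over the full range vanish
  have hPfull : ∀ b, 1 ≤ b → b ≤ l →
      ∑ k ∈ Finset.Icc 1 (p-1), ((k : ZMod p))⁻¹ ^ (2*s*b) = 0 := by
    intro b hb1 hb2
    exact psum_full _ (by positivity) (by have := hlsb b hb2; omega)
  -- power sums over the half range vanish
  have hPhalf : ∀ b, 1 ≤ b → b ≤ l →
      ∑ k ∈ Finset.Icc 1 ((p-1)/2), ((k : ZMod p))⁻¹ ^ (2*s*b) = 0 := by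
    intro b hb1 hb2
    refine psum_half hodd _ ⟨s*b, by ring⟩ (by positivity)
      (by have := hlsb b hb2; omega)
  have hEfull : ∀ m, 1 ≤ m → m ≤ l →
      ∑ A ∈ (Finset.Icc 1 (p-1)).powersetCard m, ∏ k ∈ A, ((k : ZMod p))⁻¹ ^ (2*s) = 0 :=
    fun m hm1 hml => esymm_vanish (p-1) s l hPfull m hm1 hml (by omega)
  have hEhalf : ∀ m, 1 ≤ m → m ≤ l →
      ∑ A ∈ (Finset.Icc 1 ((p-1)/2)).powersetCard m,
        ∏ k ∈ A, ((k : ZMod p))⁻¹ ^ (2*s) = 0 :=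
    fun m hm1 hml => esymm_vanish ((p-1)/2) s l hPhalf m hm1 hml (by omega)
  constructor
  · obtain ⟨hd, hc⟩ := mhs_cast (p := p) s l (p-1) (by omega)
    refine dvd_num_of _ hd ?_
    rw [hc, tuple_subsets (fun a : ℕ => ((a : ZMod p))⁻¹ ^ (2*s)), List.length_replicate]
    exact hEfull l hl le_rfl
  · intro j hj
    have hjl : j < l := by omega
    obtain ⟨hd, hc⟩ := mhs_cast (p := p) s l (j + (p-1)/2) (by omega)
    refine dvd_num_of _ hd ?_
    rw [hc, tuple_subsets (fun a : ℕ => ((a : ZMod p))⁻¹ ^ (2*s)), List.length_replicate]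
    rw [Nat.add_comm j ((p-1)/2)]
    exact esymm_split _ ((p-1)/2) j l hjl hEhalf
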